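/- For n = 3 and 2 ≤ β < 3, the solution w(z) = F((β-1)/4, (3-β)/4, 1/2; z) + α √z F((1+β)/4, (5-β)/4, 3/2; z) of the hypergeometric problem remains bounded as z → 1⁻ if and only if α = -H(3,β) = - Γ(1/2)Γ((β+1)/4)Γ((5-β)/4) / (Γ(3/2)Γ((β-1)/4)Γ((3-β)/4)). -/

import Mathlib

open Real Filter

/-- The Gauss hypergeometric series. -/
noncomputable def hypergeomF (a b c z : ℝ) : ℝ :=
  ∑' k : ℕ, Real.Gamma (a + k) * Real.Gamma (b + k) * Real.Gamma c /
    (Real.Gamma a * Real.Gamma b * Real.Gamma (c + k)) * z ^ k / (Nat.factorial k)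

noncomputable def coeffC (a b : ℝ) (k : ℕ) : ℝ :=
  Real.Gamma (a + k) * Real.Gamma (b + k) * Real.Gamma (a + b) /
    (Real.Gamma a * Real.Gamma b * Real.Gamma (a + b + k)) / (Nat.factorial k)

lemma coeffC_zero (a b : ℝ) (ha : 0 < a) (hb : 0 < b) : coeffC a b 0 = 1 := by
  have h1 := (Real.Gamma_pos_of_pos ha).ne'
  have h2 := (Real.Gamma_pos_of_pos hb).ne'
  have h3 := (Real.Gamma_pos_of_pos (by linarith : (0:ℝ) < a + b)).ne'
  simp [coeffC]
  exact ⟨⟨h1, h2⟩, h3⟩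

lemma coeffC_pos (a b : ℝ) (ha : 0 < a) (hb : 0 < b) (k : ℕ) : 0 < coeffC a b k := by
  have hk : (0:ℝ) ≤ k := Nat.cast_nonneg k
  have h1 := Real.Gamma_pos_of_pos ha
  have h2 := Real.Gamma_pos_of_pos hb
  have h3 := Real.Gamma_pos_of_pos (by linarith : (0:ℝ) < a + b)
  have h4 := Real.Gamma_pos_of_pos (by linarith : (0:ℝ) < a + k)
  have h5 := Real.Gamma_pos_of_pos (by linarith : (0:ℝ) < b + k)
  have h6 := Real.Gamma_pos_of_pos (by linarith : (0:ℝ) < a + b + k)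
  have h7 : (0:ℝ) < (Nat.factorial k : ℝ) := by positivity
  unfold coeffC
  positivity

lemma coeffC_succ (a b : ℝ) (ha : 0 < a) (hb : 0 < b) (k : ℕ) :
    coeffC a b (k + 1) = coeffC a b k * ((a + k) * (b + k) / ((a + b + k) * (k + 1))) := by
  have hk : (0:ℝ) ≤ k := Nat.cast_nonneg k
  have hak : (a + (k:ℝ)) ≠ 0 := by positivity
  have hbk : (b + (k:ℝ)) ≠ 0 := by positivity
  have habk : (a + b + (k:ℝ)) ≠ 0 := by positivity
  have e1 : Real.Gamma (a + ↑(k+1)) = (a + k) * Real.Gamma (a + k) := by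
    push_cast; rw [show a + ((k:ℝ) + 1) = (a + k) + 1 by ring, Real.Gamma_add_one hak]
  have e2 : Real.Gamma (b + ↑(k+1)) = (b + k) * Real.Gamma (b + k) := by
    push_cast; rw [show b + ((k:ℝ) + 1) = (b + k) + 1 by ring, Real.Gamma_add_one hbk]
  have e3 : Real.Gamma (a + b + ↑(k+1)) = (a + b + k) * Real.Gamma (a + b + k) := by
    push_cast; rw [show a + b + ((k:ℝ) + 1) = (a + b + k) + 1 by ring, Real.Gamma_add_one habk]
  have h1 := (Real.Gamma_pos_of_pos ha).ne'
  have h2 := (Real.Gamma_pos_of_pos hb).ne'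
  have h6 := (Real.Gamma_pos_of_pos (by linarith : (0:ℝ) < a + b + k)).ne'
  have h7 : ((Nat.factorial k : ℝ)) ≠ 0 := by positivity
  have h8 : ((k:ℝ) + 1) ≠ 0 := by positivity
  unfold coeffC
  rw [e1, e2, e3, Nat.factorial_succ]
  push_cast
  field_simp

lemma Gamma_add_nat (s : ℝ) (hs : 0 < s) (n : ℕ) :
    Real.Gamma (s + n) = Real.Gamma s * ∏ j ∈ Finset.range n, (s + j) := by
  induction n with
  | zero => simp
  | succ n ih =>
    have hsn : (s + (n:ℝ)) ≠ 0 := by positivity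
    rw [Finset.prod_range_succ, show s + ((n+1 : ℕ):ℝ) = (s + n) + 1 by push_cast; ring,
      Real.Gamma_add_one hsn, ih]
    ring


noncomputable def dSeq (a b : ℝ) (k : ℕ) : ℝ := (k : ℝ) * coeffC a b k

noncomputable def Kc (a b : ℝ) : ℝ := Real.Gamma (a + b) / (Real.Gamma a * Real.Gamma b)

lemma Kc_pos {a b : ℝ} (ha : 0 < a) (hb : 0 < b) : 0 < Kc a b := by
  have := Real.Gamma_pos_of_pos ha
  have := Real.Gamma_pos_of_pos hb
  have := Real.Gamma_pos_of_pos (by linarith : (0:ℝ) < a + b)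
  unfold Kc; positivity

lemma dSeq_succ_sub {a b : ℝ} (ha : 0 < a) (hb : 0 < b) (k : ℕ) :
    dSeq a b (k+1) - dSeq a b k = coeffC a b k * (a * b / (a + b + k)) := by
  have hk : (0:ℝ) ≤ k := Nat.cast_nonneg k
  have habk : (0:ℝ) < a + b + k := by linarith
  have hk1 : (0:ℝ) < (k:ℝ) + 1 := by linarith
  unfold dSeq
  rw [coeffC_succ a b ha hb k]
  push_cast
  field_simp
  ring

lemma dSeq_mono {a b : ℝ} (ha : 0 < a) (hb : 0 < b) : Monotone (dSeq a b) := by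
  apply monotone_nat_of_le_succ
  intro k
  have h := dSeq_succ_sub ha hb k
  have hk : (0:ℝ) ≤ k := Nat.cast_nonneg k
  have habk : (0:ℝ) < a + b + k := by linarith
  have hc := coeffC_pos a b ha hb k
  have hq : 0 < a * b / (a + b + (k:ℝ)) := by positivity
  nlinarith

lemma dSeq_eq_gammaSeq {a b : ℝ} (ha : 0 < a) (hb : 0 < b) (n : ℕ) (hn : 1 ≤ n) :
    dSeq a b (n+1) = Real.GammaSeq (a+b) n / (Real.GammaSeq a n * Real.GammaSeq b n) := by
  have hn0 : (0:ℝ) < n := by exact_mod_cast hn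
  have hPa : (0:ℝ) < ∏ j ∈ Finset.range (n+1), (a + j) :=
    Finset.prod_pos fun j _ => by have : (0:ℝ) ≤ j := Nat.cast_nonneg j; linarith
  have hPb : (0:ℝ) < ∏ j ∈ Finset.range (n+1), (b + j) :=
    Finset.prod_pos fun j _ => by have : (0:ℝ) ≤ j := Nat.cast_nonneg j; linarith
  have hPab : (0:ℝ) < ∏ j ∈ Finset.range (n+1), (a + b + j) :=
    Finset.prod_pos fun j _ => by have : (0:ℝ) ≤ j := Nat.cast_nonneg j; linarith
  have hfa : (0:ℝ) < (Nat.factorial n : ℝ) := by positivity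
  have hga := Real.Gamma_pos_of_pos ha
  have hgb := Real.Gamma_pos_of_pos hb
  have hgab := Real.Gamma_pos_of_pos (by linarith : (0:ℝ) < a + b)
  have hra : (0:ℝ) < (n:ℝ) ^ a := Real.rpow_pos_of_pos hn0 a
  have hrb : (0:ℝ) < (n:ℝ) ^ b := Real.rpow_pos_of_pos hn0 b
  have hrab : ((n:ℝ)) ^ (a + b) = (n:ℝ) ^ a * (n:ℝ) ^ b := Real.rpow_add hn0 a b
  unfold dSeq coeffC
  rw [Gamma_add_nat a ha (n+1), Gamma_add_nat b hb (n+1),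
    Gamma_add_nat (a+b) (by linarith) (n+1), Real.GammaSeq, Real.GammaSeq, Real.GammaSeq,
    hrab, Nat.factorial_succ]
  push_cast
  field_simp

lemma dSeq_tendsto {a b : ℝ} (ha : 0 < a) (hb : 0 < b) :
    Tendsto (dSeq a b) atTop (nhds (Kc a b)) := by
  have hga := (Real.Gamma_pos_of_pos ha).ne'
  have hgb := (Real.Gamma_pos_of_pos hb).ne'
  have h1 : Tendsto (fun n => Real.GammaSeq (a+b) n / (Real.GammaSeq a n * Real.GammaSeq b n))
      atTop (nhds (Kc a b)) := by
    unfold Kc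
    exact (Real.GammaSeq_tendsto_Gamma (a+b)).div
      ((Real.GammaSeq_tendsto_Gamma a).mul (Real.GammaSeq_tendsto_Gamma b))
      (by positivity)
  have h2 : Tendsto (fun n => dSeq a b (n+1)) atTop (nhds (Kc a b)) := by
    refine h1.congr' ?_
    filter_upwards [eventually_ge_atTop 1] with n hn
    exact (dSeq_eq_gammaSeq ha hb n hn).symm
  exact (tendsto_add_atTop_iff_nat 1).mp h2

lemma dSeq_le_Kc {a b : ℝ} (ha : 0 < a) (hb : 0 < b) (k : ℕ) : dSeq a b k ≤ Kc a b :=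
  (dSeq_mono ha hb).ge_of_tendsto (dSeq_tendsto ha hb) k

lemma coeffC_le {a b : ℝ} (ha : 0 < a) (hb : 0 < b) (k : ℕ) (hk : 1 ≤ k) :
    coeffC a b k ≤ Kc a b / k := by
  have hk0 : (0:ℝ) < k := by exact_mod_cast hk
  have := dSeq_le_Kc ha hb k
  unfold dSeq at this
  rw [le_div_iff₀ hk0, mul_comm]
  exact this

lemma dSeq_step_bound {a b : ℝ} (ha : 0 < a) (hb : 0 < b) (j : ℕ) (hj : 1 ≤ j) :
    dSeq a b (j+1) - dSeq a b j ≤ 2 * Kc a b * a * b * (1/(j:ℝ) - 1/((j:ℝ)+1)) := by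
  have hj0 : (0:ℝ) < j := by exact_mod_cast hj
  have hK := Kc_pos ha hb
  have h1 := dSeq_succ_sub ha hb j
  have h2 := coeffC_le ha hb j hj
  have habj : (0:ℝ) < a + b + j := by linarith
  have e1 : 1/(j:ℝ) - 1/((j:ℝ)+1) = 1/((j:ℝ)*((j:ℝ)+1)) := by
    field_simp
    ring
  rw [h1, e1]
  have h3 : coeffC a b j * (a * b / (a + b + j)) ≤ (Kc a b / j) * (a * b / j) := by
    apply mul_le_mul h2 _ (by positivity) (by positivity)
    apply div_le_div_of_nonneg_left (by positivity) hj0 (by linarith)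
  calc coeffC a b j * (a * b / (a + b + j)) ≤ (Kc a b / j) * (a * b / j) := h3
    _ ≤ 2 * Kc a b * a * b * (1/((j:ℝ)*((j:ℝ)+1))) := by
        rw [div_mul_div_comm, mul_one_div]
        rw [div_le_div_iff₀ (by positivity) (by positivity)]
        have hj1 : (1:ℝ) ≤ j := by exact_mod_cast hj
        have h4 : (j:ℝ)+1 ≤ 2*j := by linarith
        nlinarith [mul_le_mul_of_nonneg_left h4 (show (0:ℝ) ≤ Kc a b * (a*b) * j by positivity)]

lemma dSeq_tail_bound {a b : ℝ} (ha : 0 < a) (hb : 0 < b) (k : ℕ) (hk : 1 ≤ k) :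
    Kc a b - dSeq a b k ≤ 2 * Kc a b * a * b / k := by
  have hk0 : (0:ℝ) < k := by exact_mod_cast hk
  have key : ∀ m : ℕ, dSeq a b (k+m) ≤ dSeq a b k + 2 * Kc a b * a * b * (1/(k:ℝ) - 1/((k:ℝ)+m)) := by
    intro m
    induction m with
    | zero => simp
    | succ m ih =>
      have hkm : 1 ≤ k + m := le_add_right hk
      have h := dSeq_step_bound ha hb (k+m) hkm
      have hc : ((k+m : ℕ) : ℝ) = (k:ℝ) + m := by push_cast; ring
      rw [hc] at h
      have e : k + (m+1) = (k+m) + 1 := by ring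
      rw [e]
      push_cast at h ⊢
      ring_nf at h ih ⊢
      linarith
  have h1 : Tendsto (fun m : ℕ => dSeq a b (k+m)) atTop (nhds (Kc a b)) := by
    have := (dSeq_tendsto ha hb).comp (tendsto_add_atTop_nat k)
    simpa [Function.comp_def, Nat.add_comm] using this
  have h2 : Tendsto (fun m : ℕ => dSeq a b k + 2 * Kc a b * a * b * (1/(k:ℝ) - 1/((k:ℝ)+m)))
      atTop (nhds (dSeq a b k + 2 * Kc a b * a * b * (1/(k:ℝ) - 0))) := by
    apply tendsto_const_nhds.add
    apply Tendsto.const_mul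
    apply tendsto_const_nhds.sub
    have : Tendsto (fun m : ℕ => (k:ℝ) + m) atTop atTop :=
      tendsto_atTop_add_const_left _ _ tendsto_natCast_atTop_atTop
    exact Tendsto.comp tendsto_inv_atTop_zero this |>.congr (fun m => (one_div _).symm)
  have := le_of_tendsto_of_tendsto' h1 h2 key
  rw [sub_zero] at this
  have : Kc a b ≤ dSeq a b k + 2 * Kc a b * a * b / k := by
    rw [mul_one_div] at this; linarith
  linarith

lemma summable_inv_sq : Summable (fun k : ℕ => 1 / ((k:ℝ)+1)^2) := by
  have h : Summable (fun k : ℕ => 1 / ((k:ℝ))^2) := by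
    rw [Real.summable_one_div_nat_pow]
    norm_num
  have := (summable_nat_add_iff 1).mpr h
  refine this.congr fun k => ?_
  push_cast
  ring

lemma hasSum_coeff {a b z : ℝ} (ha : 0 < a) (hb : 0 < b) (hz0 : 0 ≤ z) (hz1 : z < 1) :
    HasSum (fun k : ℕ => coeffC a b k * z ^ k) (hypergeomF a b (a+b) z) := by
  have hsum : Summable (fun k : ℕ => coeffC a b k * z ^ k) := by
    apply Summable.of_nonneg_of_le
      (fun k => mul_nonneg (coeffC_pos a b ha hb k).le (pow_nonneg hz0 k))
      (fun k => ?_) ((summable_geometric_of_lt_one hz0 hz1).mul_left (1 + Kc a b))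
    have hck : coeffC a b k ≤ 1 + Kc a b := by
      rcases Nat.eq_zero_or_pos k with rfl | hk
      · rw [coeffC_zero a b ha hb]; linarith [Kc_pos ha hb]
      · have h1 := coeffC_le ha hb k hk
        have hk1 : (1:ℝ) ≤ k := by exact_mod_cast hk
        have : Kc a b / k ≤ Kc a b := by
          rw [div_le_iff₀ (by linarith)]
          nlinarith [Kc_pos ha hb]
        linarith
    have hzk : (0:ℝ) ≤ z ^ k := by positivity
    nlinarith [coeffC_pos a b ha hb k]
  have : hypergeomF a b (a+b) z = ∑' k, coeffC a b k * z ^ k := by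
    unfold hypergeomF coeffC
    exact tsum_congr fun k => by ring
  rw [this]
  exact hsum.hasSum

lemma hyper_log_bound {a b : ℝ} (ha : 0 < a) (hb : 0 < b) :
    ∃ C : ℝ, ∀ z : ℝ, 0 ≤ z → z < 1 →
      |hypergeomF a b (a+b) z + Kc a b * Real.log (1-z)| ≤ C := by
  set K := Kc a b with hKdef
  have hK := Kc_pos ha hb
  set T : ℝ := ∑' k : ℕ, 1 / ((k:ℝ)+1)^2 with hT
  refine ⟨1 + 2*K*a*b*T, fun z hz0 hz1 => ?_⟩
  have hF := hasSum_coeff ha hb hz0 hz1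
  have hF1 : HasSum (fun k : ℕ => coeffC a b (k+1) * z ^ (k+1)) (hypergeomF a b (a+b) z - 1) := by
    have h0 : ∑ i ∈ Finset.range 1, coeffC a b i * z ^ i = 1 := by
      simp [coeffC_zero a b ha hb]
    refine (hasSum_nat_add_iff (f := fun k : ℕ => coeffC a b k * z ^ k) 1).mpr ?_
    rw [h0, sub_add_cancel]
    exact hF
  have habs : |z| < 1 := by rw [abs_of_nonneg hz0]; exact hz1
  have hlog : HasSum (fun k : ℕ => K * (z ^ (k+1) / ((k:ℝ)+1))) (K * (-Real.log (1-z))) := by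
    have := hasSum_pow_div_log_of_abs_lt_one habs
    have := this.mul_left K
    refine this.congr fun k => by push_cast; ring
  -- S = sum of (K/(k+1) - coeffC (k+1)) z^(k+1)
  have hS : HasSum (fun k : ℕ => K * (z ^ (k+1) / ((k:ℝ)+1)) - coeffC a b (k+1) * z ^ (k+1))
      (K * (-Real.log (1-z)) - (hypergeomF a b (a+b) z - 1)) := hlog.sub hF1
  set S := K * (-Real.log (1-z)) - (hypergeomF a b (a+b) z - 1) with hSdef
  have hterm_nonneg : ∀ k : ℕ, 0 ≤ K * (z ^ (k+1) / ((k:ℝ)+1)) - coeffC a b (k+1) * z ^ (k+1) := by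
    intro k
    have h1 := coeffC_le ha hb (k+1) (Nat.le_add_left 1 k)
    have hc : ((k+1 : ℕ) : ℝ) = (k:ℝ)+1 := by push_cast; ring
    rw [hc] at h1
    have hzk : (0:ℝ) ≤ z ^ (k+1) := by positivity
    have : coeffC a b (k+1) * z ^ (k+1) ≤ (K / ((k:ℝ)+1)) * z ^ (k+1) :=
      mul_le_mul_of_nonneg_right h1 hzk
    rw [div_mul_eq_mul_div, mul_div_assoc] at this
    linarith
  have hterm_le : ∀ k : ℕ, K * (z ^ (k+1) / ((k:ℝ)+1)) - coeffC a b (k+1) * z ^ (k+1) ≤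
      2*K*a*b * (1 / ((k:ℝ)+1)^2) := by
    intro k
    have hk1 : (1:ℕ) ≤ k+1 := Nat.le_add_left 1 k
    have htail := dSeq_tail_bound ha hb (k+1) hk1
    have hc : ((k+1 : ℕ) : ℝ) = (k:ℝ)+1 := by push_cast; ring
    rw [hc] at htail
    have hkpos : (0:ℝ) < (k:ℝ)+1 := by positivity
    -- K/(k+1) - coeffC (k+1) = (K - dSeq (k+1))/(k+1) ≤ 2Kab/(k+1)^2
    have hd : dSeq a b (k+1) = ((k:ℝ)+1) * coeffC a b (k+1) := by
      unfold dSeq; rw [hc]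
    have hcoeff : K / ((k:ℝ)+1) - coeffC a b (k+1) ≤ 2*K*a*b / ((k:ℝ)+1)^2 := by
      have hthis : K - ((k:ℝ)+1) * coeffC a b (k+1) ≤ 2*K*a*b / ((k:ℝ)+1) := by
        rw [← hd]; exact htail
      have h2 := (div_le_div_iff_of_pos_right hkpos).mpr hthis
      have e1 : (K - ((k:ℝ)+1)*coeffC a b (k+1)) / ((k:ℝ)+1)
          = K/((k:ℝ)+1) - coeffC a b (k+1) := by field_simp
      have e2 : (2*K*a*b/((k:ℝ)+1)) / ((k:ℝ)+1) = 2*K*a*b/((k:ℝ)+1)^2 := by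
        rw [div_div]; ring_nf
      rw [e1, e2] at h2
      exact h2
    have hz1' : z ^ (k+1) ≤ 1 := pow_le_one₀ hz0 hz1.le
    have hzk : (0:ℝ) ≤ z ^ (k+1) := by positivity
    calc K * (z ^ (k+1) / ((k:ℝ)+1)) - coeffC a b (k+1) * z ^ (k+1)
        = (K / ((k:ℝ)+1) - coeffC a b (k+1)) * z ^ (k+1) := by ring
      _ ≤ (2*K*a*b / ((k:ℝ)+1)^2) * 1 := by
          apply mul_le_mul hcoeff hz1' hzk (by positivity)
      _ = 2*K*a*b * (1 / ((k:ℝ)+1)^2) := by ring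
  have hS_nonneg : 0 ≤ S := hS.nonneg hterm_nonneg
  have hS_le : S ≤ 2*K*a*b*T := by
    have hbs : HasSum (fun k : ℕ => 2*K*a*b * (1 / ((k:ℝ)+1)^2)) (2*K*a*b*T) := by
      exact (summable_inv_sq.hasSum).mul_left _
    exact hasSum_le hterm_le hS hbs
  have heq : hypergeomF a b (a+b) z + K * Real.log (1-z) = 1 - S := by
    rw [hSdef]; ring
  rw [heq, abs_le]
  have hT0 : 0 ≤ 2*K*a*b*T := le_trans hS_nonneg hS_le
  constructor <;> nlinarith

lemma one_sub_sqrt_mul_log_abs_le {z : ℝ} (hz0 : 0 < z) (hz1 : z < 1) :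
    |(1 - Real.sqrt z) * Real.log (1 - z)| ≤ 1 := by
  have ht0 : (0:ℝ) < 1 - z := by linarith
  have hs1 : Real.sqrt z ≤ 1 := Real.sqrt_le_one.mpr hz1.le
  have hzs : z ≤ Real.sqrt z := by
    nlinarith [Real.sq_sqrt hz0.le, Real.sqrt_nonneg z]
  have hlneg : Real.log (1 - z) < 0 := Real.log_neg ht0 (by linarith)
  have habs : |(1 - Real.sqrt z) * Real.log (1 - z)|
      = (1 - Real.sqrt z) * (-Real.log (1 - z)) := by
    rw [abs_mul, abs_of_nonneg (by linarith), abs_of_neg hlneg]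
  rw [habs]
  have hlog : -Real.log (1 - z) ≤ (1 - z)⁻¹ := by
    have := Real.log_le_sub_one_of_pos (show (0:ℝ) < (1-z)⁻¹ by positivity)
    rw [Real.log_inv] at this
    linarith [inv_pos.mpr ht0]
  calc (1 - Real.sqrt z) * (-Real.log (1 - z)) ≤ (1 - z) * (1 - z)⁻¹ := by
        apply mul_le_mul (by linarith) hlog (by linarith [hlneg]) ht0.le
    _ = 1 := mul_inv_cancel₀ ht0.ne'


set_option maxHeartbeats 1000000 in
/-- Case `n = 3`: the solution
`w(z) = F((β-1)/4,(3-β)/4,1/2;z) + α √z F((1+β)/4,(5-β)/4,3/2;z)` of the hypergeometric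
problem remains bounded as `z → 1⁻` if and only if
`α = -Γ(1/2)Γ((β+1)/4)Γ((5-β)/4)/(Γ(3/2)Γ((β-1)/4)Γ((3-β)/4)) = -H(3,β)`. -/
theorem bounded_iff_alpha_n3 (β : ℝ) (hβ : 2 ≤ β) (hβn : β < 3) (α : ℝ)
    (w : ℝ → ℝ)
    (hw : ∀ z : ℝ, w z = hypergeomF ((β - 1) / 4) ((3 - β) / 4) (1 / 2) z +
        α * Real.sqrt z * hypergeomF ((1 + β) / 4) ((5 - β) / 4) (3 / 2) z) :
    (∃ C : ℝ, ∀ᶠ z in nhdsWithin 1 (Set.Iio (1 : ℝ)), |w z| ≤ C) ↔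
      α = -(Real.Gamma (1 / 2) * Real.Gamma ((β + 1) / 4) * Real.Gamma ((5 - β) / 4)) /
          (Real.Gamma (3 / 2) * Real.Gamma ((β - 1) / 4) * Real.Gamma ((3 - β) / 4)) := by
  have ha1 : 0 < (β - 1) / 4 := by linarith
  have hb1 : 0 < (3 - β) / 4 := by linarith
  have ha2 : 0 < (1 + β) / 4 := by linarith
  have hb2 : 0 < (5 - β) / 4 := by linarith
  set a₁ := (β - 1) / 4
  set b₁ := (3 - β) / 4
  set a₂ := (1 + β) / 4
  set b₂ := (5 - β) / 4
  set K₁ := Kc a₁ b₁ with hK1def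
  set K₂ := Kc a₂ b₂ with hK2def
  have hK1 : 0 < K₁ := Kc_pos ha1 hb1
  have hK2 : 0 < K₂ := Kc_pos ha2 hb2
  have e1 : (1:ℝ)/2 = a₁ + b₁ := by simp only [a₁, b₁]; ring
  have e2 : (3:ℝ)/2 = a₂ + b₂ := by simp only [a₂, b₂]; ring
  have hw' : ∀ z : ℝ, w z = hypergeomF a₁ b₁ (a₁+b₁) z +
      α * Real.sqrt z * hypergeomF a₂ b₂ (a₂+b₂) z := by
    intro z; rw [hw z, e1, e2]
  -- the target α value equals -K₁/K₂
  have halpha : -(Real.Gamma (1 / 2) * Real.Gamma ((β + 1) / 4) * Real.Gamma ((5 - β) / 4)) /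
      (Real.Gamma (3 / 2) * Real.Gamma ((β - 1) / 4) * Real.Gamma ((3 - β) / 4))
      = -K₁ / K₂ := by
    have g1 := (Real.Gamma_pos_of_pos ha1).ne'
    have g2 := (Real.Gamma_pos_of_pos hb1).ne'
    have g3 := (Real.Gamma_pos_of_pos ha2).ne'
    have g4 := (Real.Gamma_pos_of_pos hb2).ne'
    have g5 := (Real.Gamma_pos_of_pos (show (0:ℝ) < 1/2 by norm_num)).ne'
    have g6 := (Real.Gamma_pos_of_pos (show (0:ℝ) < 3/2 by norm_num)).ne'
    have eβ : (β + 1)/4 = a₂ := by simp only [a₂]; ring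
    rw [hK1def, hK2def, Kc, Kc, ← e1, ← e2, eβ]
    rw [show (5-β)/4 = b₂ from rfl, show (β-1)/4 = a₁ from rfl, show (3-β)/4 = b₁ from rfl]
    field_simp
  obtain ⟨C₁, hC₁⟩ := hyper_log_bound ha1 hb1
  obtain ⟨C₂, hC₂⟩ := hyper_log_bound ha2 hb2
  simp only [← hK1def] at hC₁
  simp only [← hK2def] at hC₂
  clear_value K₁ K₂
  have hmem : Set.Ioo (0:ℝ) 1 ∈ nhdsWithin 1 (Set.Iio (1:ℝ)) :=
    Ioo_mem_nhdsLT_of_mem (by norm_num : (1:ℝ) ∈ Set.Ioc (0:ℝ) 1)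
  have hL : Tendsto (fun z : ℝ => Real.log (1 - z)) (nhdsWithin 1 (Set.Iio 1)) atBot := by
    apply Real.tendsto_log_nhdsGT_zero.comp
    apply tendsto_nhdsWithin_of_tendsto_nhds_of_eventually_within
    · have h : Tendsto (fun z : ℝ => 1 - z) (nhds 1) (nhds 0) := by
        have h0 : Continuous (fun z : ℝ => 1 - z) := by continuity
        have := h0.tendsto (1:ℝ)
        simpa using this
      exact h.mono_left nhdsWithin_le_nhds
    · filter_upwards [self_mem_nhdsWithin] with z hz
      exact Set.mem_Ioi.mpr (sub_pos.mpr hz)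
  have habsL : Tendsto (fun z : ℝ => |Real.log (1 - z)|) (nhdsWithin 1 (Set.Iio 1)) atTop :=
    tendsto_abs_atBot_atTop.comp hL
  constructor
  · rintro ⟨C, hC⟩
    rw [halpha]
    by_contra hne'
    have hne : K₁ + α * K₂ ≠ 0 := by
      intro h0
      apply hne'
      field_simp
      linarith
    have hsqrt : Tendsto (fun z : ℝ => K₁ + α * Real.sqrt z * K₂)
        (nhdsWithin 1 (Set.Iio 1)) (nhds (K₁ + α * K₂)) := by
      have h := (Real.continuous_sqrt.tendsto 1).mono_left
        (nhdsWithin_le_nhds (s := Set.Iio (1:ℝ)))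
      rw [Real.sqrt_one] at h
      have h2 := tendsto_const_nhds (x := K₁) (f := nhdsWithin 1 (Set.Iio (1:ℝ))) |>.add
        ((h.const_mul α).mul_const K₂)
      have e : K₁ + α * 1 * K₂ = K₁ + α * K₂ := by ring
      rwa [e] at h2
    set c := K₁ + α * K₂ with hcdef
    have hc : 0 < |c| := abs_pos.mpr hne
    clear_value c
    set C' := C₁ + |α| * C₂ + C with hC'def
    clear_value C'
    have hev1 : ∀ᶠ z in nhdsWithin 1 (Set.Iio (1:ℝ)),
        |c|/2 < |K₁ + α * Real.sqrt z * K₂| :=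
      hsqrt.abs.eventually (eventually_gt_nhds (by linarith : |c|/2 < |c|))
    have hev2 : ∀ᶠ z in nhdsWithin 1 (Set.Iio (1:ℝ)),
        (2*C'+2)/|c| ≤ |Real.log (1-z)| := habsL.eventually_ge_atTop _
    have hev : ∀ᶠ z in nhdsWithin 1 (Set.Iio (1:ℝ)), False := by
      filter_upwards [hmem, hC, hev1, hev2] with z hz hwz h1 h2
      have hR1 := hC₁ z hz.1.le hz.2
      have hR2 := hC₂ z hz.1.le hz.2
      have hs0 : 0 ≤ Real.sqrt z := Real.sqrt_nonneg z
      have hs1 : Real.sqrt z ≤ 1 := Real.sqrt_le_one.mpr hz.2.le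
      have hww := hw' z
      obtain ⟨F₁, hF₁⟩ : ∃ t, hypergeomF a₁ b₁ (a₁+b₁) z = t := ⟨_, rfl⟩
      obtain ⟨F₂, hF₂⟩ : ∃ t, hypergeomF a₂ b₂ (a₂+b₂) z = t := ⟨_, rfl⟩
      rw [hF₁] at hR1
      rw [hF₂] at hR2
      rw [hF₁, hF₂] at hww
      set X := F₁ + K₁ * Real.log (1-z) with hXdef
      set Y := F₂ + K₂ * Real.log (1-z) with hYdef
      have hkey : (K₁ + α * Real.sqrt z * K₂) * Real.log (1-z)
          = X + α * Real.sqrt z * Y + (- w z) := by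
        rw [hww, hXdef, hYdef]; ring
      have hXb : |X| ≤ C₁ := hR1
      have hYb : |α * Real.sqrt z * Y| ≤ |α| * C₂ := by
        rw [abs_mul, abs_mul, abs_of_nonneg hs0]
        have h3 : Real.sqrt z * |Y| ≤ C₂ := by
          nlinarith [abs_nonneg Y, mul_nonneg (sub_nonneg.mpr hs1) (abs_nonneg Y)]
        rw [mul_assoc]
        exact mul_le_mul_of_nonneg_left h3 (abs_nonneg α)
      have hbig : |(K₁ + α * Real.sqrt z * K₂) * Real.log (1-z)| ≤ C' := by
        rw [hkey]
        calc |X + α * Real.sqrt z * Y + (- w z)|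
            ≤ |X| + |α * Real.sqrt z * Y| + |(- w z)| := abs_add_three _ _ _
          _ ≤ C₁ + |α| * C₂ + C := by rw [abs_neg]; linarith
          _ = C' := hC'def.symm
      rw [abs_mul] at hbig
      have hstep : |c|/2 * ((2*C'+2)/|c|) ≤ |c|/2 * |Real.log (1-z)| :=
        mul_le_mul_of_nonneg_left h2 (by positivity)
      have heval : |c|/2 * ((2*C'+2)/|c|) = C' + 1 := by
        field_simp
      have hLnn : 0 ≤ |Real.log (1-z)| := abs_nonneg _
      nlinarith [h1, hbig, hstep, heval]
    obtain ⟨z, hz⟩ := hev.exists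
    exact hz
  · intro hα
    rw [halpha] at hα
    have hαK : α * K₂ = -K₁ := by
      rw [hα]; field_simp
    refine ⟨C₁ + |α| * C₂ + |K₁|, ?_⟩
    filter_upwards [hmem] with z hz
    have hR1 := hC₁ z hz.1.le hz.2
    have hR2 := hC₂ z hz.1.le hz.2
    have hlog1 := one_sub_sqrt_mul_log_abs_le hz.1 hz.2
    have hs0 : 0 ≤ Real.sqrt z := Real.sqrt_nonneg z
    have hs1 : Real.sqrt z ≤ 1 := Real.sqrt_le_one.mpr hz.2.le
    have hww := hw' z
    obtain ⟨F₁, hF₁⟩ : ∃ t, hypergeomF a₁ b₁ (a₁+b₁) z = t := ⟨_, rfl⟩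
    obtain ⟨F₂, hF₂⟩ : ∃ t, hypergeomF a₂ b₂ (a₂+b₂) z = t := ⟨_, rfl⟩
    rw [hF₁] at hR1
    rw [hF₂] at hR2
    rw [hF₁, hF₂] at hww
    set X := F₁ + K₁ * Real.log (1-z) with hXdef
    set Y := F₂ + K₂ * Real.log (1-z) with hYdef
    have hkey : w z = X + α * Real.sqrt z * Y
        + (- (K₁ * ((1 - Real.sqrt z) * Real.log (1-z)))) := by
      rw [hww, hXdef, hYdef]
      linear_combination (-(Real.sqrt z * Real.log (1-z))) * hαK
    have hYb : |α * Real.sqrt z * Y| ≤ |α| * C₂ := by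
      rw [abs_mul, abs_mul, abs_of_nonneg hs0]
      have h3 : Real.sqrt z * |Y| ≤ C₂ := by
        nlinarith [abs_nonneg Y, mul_nonneg (sub_nonneg.mpr hs1) (abs_nonneg Y)]
      rw [mul_assoc]
      exact mul_le_mul_of_nonneg_left h3 (abs_nonneg α)
    have hZb : |(- (K₁ * ((1 - Real.sqrt z) * Real.log (1-z))))| ≤ |K₁| := by
      rw [abs_neg, abs_mul]
      nlinarith [abs_nonneg K₁, abs_nonneg ((1 - Real.sqrt z) * Real.log (1-z))]
    calc |w z| = |X + α * Real.sqrt z * Y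
        + (- (K₁ * ((1 - Real.sqrt z) * Real.log (1-z))))| := by rw [hkey]
      _ ≤ |X| + |α * Real.sqrt z * Y|
          + |(- (K₁ * ((1 - Real.sqrt z) * Real.log (1-z))))| := abs_add_three _ _ _
      _ ≤ C₁ + |α| * C₂ + |K₁| := by linarith
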